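/- Let M₁, M₂ be ITL^e models and Z_n ⊆ ⋯ ⊆ Z_0 a bounded ◇-bisimulation. Then for all i ≤ n, if w₁ Z_i w₂, then for every formula φ in the language with atoms, ⊥, ∧, ∨, →, ◯, ◇ of length |φ| ≤ i: M₁, w₁ ⊨ φ iff M₂, w₂ ⊨ φ. -/
import Mathlib


inductive TForm : Type where
  | atom : ℕ → TForm
  | bot : TForm
  | and : TForm → TForm → TForm
  | or : TForm → TForm → TForm
  | imp : TForm → TForm → TForm
  | next : TForm → TForm
  | dia : TForm → TForm
  | box : TForm → TForm
  | untl : TForm → TForm → TForm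
  | rels : TForm → TForm → TForm

/-- Intuitionistic temporal satisfaction over a dynamic poset `(W, ≤, S)`
with valuation `V`. -/
def sat {W : Type} [PartialOrder W] (S : W → W) (V : W → ℕ → Prop) : TForm → W → Prop
  | .atom p, w => V w p
  | .bot, _ => False
  | .and φ ψ, w => sat S V φ w ∧ sat S V ψ w
  | .or φ ψ, w => sat S V φ w ∨ sat S V ψ w
  | .imp φ ψ, w => ∀ v, w ≤ v → sat S V φ v → sat S V ψ v
  | .next φ, w => sat S V φ (S w)
  | .dia φ, w => ∃ k, sat S V φ (S^[k] w)
  | .box φ, w => ∀ k, sat S V φ (S^[k] w)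
  | .untl φ ψ, w => ∃ k, sat S V ψ (S^[k] w) ∧ ∀ i < k, sat S V φ (S^[i] w)
  | .rels φ ψ, w => ∀ k, sat S V ψ (S^[k] w) ∨ ∃ i < k, sat S V φ (S^[i] w)

/-- The length (number of connectives) of a formula. -/
def len : TForm → ℕ
  | .atom _ => 0
  | .bot => 0
  | .and φ ψ => 1 + len φ + len ψ
  | .or φ ψ => 1 + len φ + len ψ
  | .imp φ ψ => 1 + len φ + len ψ
  | .next φ => 1 + len φ
  | .dia φ => 1 + len φ
  | .box φ => 1 + len φ
  | .untl φ ψ => 1 + len φ + len ψ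
  | .rels φ ψ => 1 + len φ + len ψ

/-- Formulas using only the connectives ⊥, ∧, ∨, →, and {next, dia}. -/
def LangDia : TForm → Prop
  | .atom _ => True
  | .bot => True
  | .and φ ψ => LangDia φ ∧ LangDia ψ
  | .or φ ψ => LangDia φ ∧ LangDia ψ
  | .imp φ ψ => LangDia φ ∧ LangDia ψ
  | .next φ => LangDia φ
  | .dia φ => LangDia φ
  | .box _ => False
  | .untl _ _ => False
  | .rels _ _ => False


lemma iter_mono {W : Type} [PartialOrder W] (S : W → W)
    (hS : ∀ w v : W, w ≤ v → S w ≤ S v) (k : ℕ) :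
    ∀ w v : W, w ≤ v → S^[k] w ≤ S^[k] v := by
  induction k with
  | zero => intro w v h; simpa using h
  | succ k ih =>
    intro w v h
    simp only [Function.iterate_succ_apply]
    exact ih _ _ (hS _ _ h)

lemma sat_mono {W : Type} [PartialOrder W] (S : W → W) (V : W → ℕ → Prop)
    (hS : ∀ w v : W, w ≤ v → S w ≤ S v)
    (hV : ∀ w v : W, w ≤ v → ∀ p, V w p → V v p) :
    ∀ φ (w v : W), w ≤ v → sat S V φ w → sat S V φ v := by
  intro φ
  induction φ with
  | atom p => intro w v h hw; exact hV w v h p hw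
  | bot => intro w v h hw; exact hw
  | and φ ψ ihφ ihψ => intro w v h hw; exact ⟨ihφ _ _ h hw.1, ihψ _ _ h hw.2⟩
  | or φ ψ ihφ ihψ =>
    intro w v h hw
    exact hw.elim (fun h1 => Or.inl (ihφ _ _ h h1)) (fun h1 => Or.inr (ihψ _ _ h h1))
  | imp φ ψ ihφ ihψ => intro w v h hw u hu hφ; exact hw u (le_trans h hu) hφ
  | next φ ih => intro w v h hw; exact ih _ _ (hS _ _ h) hw
  | dia φ ih =>
    rintro w v h ⟨k, hk⟩
    exact ⟨k, ih _ _ (iter_mono S hS k _ _ h) hk⟩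
  | box φ ih => intro w v h hw k; exact ih _ _ (iter_mono S hS k _ _ h) (hw k)
  | untl φ ψ ihφ ihψ =>
    rintro w v h ⟨k, hk, hi⟩
    exact ⟨k, ihψ _ _ (iter_mono S hS k _ _ h) hk,
      fun i hik => ihφ _ _ (iter_mono S hS i _ _ h) (hi i hik)⟩
  | rels φ ψ ihφ ihψ =>
    intro w v h hw k
    refine (hw k).elim (fun h1 => Or.inl (ihψ _ _ (iter_mono S hS k _ _ h) h1))
      (fun h1 => Or.inr ?_)
    obtain ⟨i, hik, h1⟩ := h1
    exact ⟨i, hik, ihφ _ _ (iter_mono S hS i _ _ h) h1⟩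

/-- Bounded ◇-bisimulations preserve ◇-formulas of bounded length. -/
theorem dia_bisim_invariance {W₁ W₂ : Type} [PartialOrder W₁] [PartialOrder W₂]
    (S₁ : W₁ → W₁) (V₁ : W₁ → ℕ → Prop) (S₂ : W₂ → W₂) (V₂ : W₂ → ℕ → Prop)
    (hS₁ : ∀ w v : W₁, w ≤ v → S₁ w ≤ S₁ v)
    (hV₁ : ∀ w v : W₁, w ≤ v → ∀ p, V₁ w p → V₁ v p)
    (hS₂ : ∀ w v : W₂, w ≤ v → S₂ w ≤ S₂ v)
    (hV₂ : ∀ w v : W₂, w ≤ v → ∀ p, V₂ w p → V₂ v p)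
    (n : ℕ) (hn : 0 < n) (Z : ℕ → W₁ → W₂ → Prop)
    (hchain : ∀ i < n, ∀ w₁ w₂, Z (i+1) w₁ w₂ → Z i w₁ w₂)
    (hatoms : ∀ i < n, ∀ w₁ w₂, Z i w₁ w₂ → ∀ p, V₁ w₁ p ↔ V₂ w₂ p)
    (hforth_imp : ∀ i < n, ∀ w₁ w₂, Z (i+1) w₁ w₂ →
      ∀ v₁, w₁ ≤ v₁ → ∃ v₂, w₂ ≤ v₂ ∧ Z i v₁ v₂)
    (hback_imp : ∀ i < n, ∀ w₁ w₂, Z (i+1) w₁ w₂ →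
      ∀ v₂, w₂ ≤ v₂ → ∃ v₁, w₁ ≤ v₁ ∧ Z i v₁ v₂)
    (hnext : ∀ i < n, ∀ w₁ w₂, Z (i+1) w₁ w₂ → Z i (S₁ w₁) (S₂ w₂))
    (hforth_dia : ∀ i < n, ∀ w₁ w₂, Z (i+1) w₁ w₂ → ∀ k₁ : ℕ, ∃ k₂ : ℕ, ∃ v₁ v₂,
      v₂ ≤ S₂^[k₂] w₂ ∧ S₁^[k₁] w₁ ≤ v₁ ∧ Z i v₁ v₂)
    (hback_dia : ∀ i < n, ∀ w₁ w₂, Z (i+1) w₁ w₂ → ∀ k₂ : ℕ, ∃ k₁ : ℕ, ∃ v₁ v₂,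
      v₁ ≤ S₁^[k₁] w₁ ∧ S₂^[k₂] w₂ ≤ v₂ ∧ Z i v₁ v₂) :
    ∀ i ≤ n, ∀ w₁ w₂, Z i w₁ w₂ → ∀ φ, LangDia φ → len φ ≤ i →
      (sat S₁ V₁ φ w₁ ↔ sat S₂ V₂ φ w₂) := by
  
  have hat : ∀ i ≤ n, ∀ w₁ w₂, Z i w₁ w₂ → ∀ p, V₁ w₁ p ↔ V₂ w₂ p := by
    intro i hi w₁ w₂ hZ p
    rcases lt_or_eq_of_le hi with h | h
    · exact hatoms i h w₁ w₂ hZ p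
    · obtain ⟨j, rfl⟩ : ∃ j, i = j + 1 := ⟨i - 1, by omega⟩
      exact hatoms j (by omega) w₁ w₂ (hchain j (by omega) w₁ w₂ hZ) p
  have main : ∀ φ (i : ℕ), i ≤ n → ∀ w₁ w₂, Z i w₁ w₂ → LangDia φ → len φ ≤ i →
      (sat S₁ V₁ φ w₁ ↔ sat S₂ V₂ φ w₂) := by
    intro φ
    induction φ with
    | atom p => intro i hi w₁ w₂ hZ _ _; exact hat i hi w₁ w₂ hZ p
    | bot => intro _ _ _ _ _ _ _; exact Iff.rfl
    | and φ ψ ihφ ihψ =>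
      intro i hi w₁ w₂ hZ hL hlen
      simp only [LangDia] at hL
      simp only [len] at hlen
      simp only [sat]
      rw [ihφ i hi w₁ w₂ hZ hL.1 (by omega), ihψ i hi w₁ w₂ hZ hL.2 (by omega)]
    | or φ ψ ihφ ihψ =>
      intro i hi w₁ w₂ hZ hL hlen
      simp only [LangDia] at hL
      simp only [len] at hlen
      simp only [sat]
      rw [ihφ i hi w₁ w₂ hZ hL.1 (by omega), ihψ i hi w₁ w₂ hZ hL.2 (by omega)]
    | imp φ ψ ihφ ihψ =>
      intro i hi w₁ w₂ hZ hL hlen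
      simp only [LangDia] at hL
      simp only [len] at hlen
      obtain ⟨j, rfl⟩ : ∃ j, i = j + 1 := ⟨i - 1, by omega⟩
      have hjn : j < n := by omega
      simp only [sat]
      constructor
      · intro h v₂ hv₂ hφ2
        obtain ⟨v₁, hv₁, hZ'⟩ := hback_imp j hjn w₁ w₂ hZ v₂ hv₂
        have hφ1 := (ihφ j (by omega) v₁ v₂ hZ' hL.1 (by omega)).mpr hφ2
        exact (ihψ j (by omega) v₁ v₂ hZ' hL.2 (by omega)).mp (h v₁ hv₁ hφ1)
      · intro h v₁ hv₁ hφ1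
        obtain ⟨v₂, hv₂, hZ'⟩ := hforth_imp j hjn w₁ w₂ hZ v₁ hv₁
        have hφ2 := (ihφ j (by omega) v₁ v₂ hZ' hL.1 (by omega)).mp hφ1
        exact (ihψ j (by omega) v₁ v₂ hZ' hL.2 (by omega)).mpr (h v₂ hv₂ hφ2)
    | next φ ih =>
      intro i hi w₁ w₂ hZ hL hlen
      simp only [LangDia] at hL
      simp only [len] at hlen
      obtain ⟨j, rfl⟩ : ∃ j, i = j + 1 := ⟨i - 1, by omega⟩
      have hjn : j < n := by omega
      simp only [sat]
      exact ih j (by omega) (S₁ w₁) (S₂ w₂) (hnext j hjn w₁ w₂ hZ) hL (by omega)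
    | dia φ ih =>
      intro i hi w₁ w₂ hZ hL hlen
      simp only [LangDia] at hL
      simp only [len] at hlen
      obtain ⟨j, rfl⟩ : ∃ j, i = j + 1 := ⟨i - 1, by omega⟩
      have hjn : j < n := by omega
      simp only [sat]
      constructor
      · rintro ⟨k₁, hk₁⟩
        obtain ⟨k₂, v₁, v₂, hv₂, hv₁, hZ'⟩ := hforth_dia j hjn w₁ w₂ hZ k₁
        have h1 := sat_mono S₁ V₁ hS₁ hV₁ φ _ _ hv₁ hk₁
        have h2 := (ih j (by omega) v₁ v₂ hZ' hL (by omega)).mp h1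
        exact ⟨k₂, sat_mono S₂ V₂ hS₂ hV₂ φ _ _ hv₂ h2⟩
      · rintro ⟨k₂, hk₂⟩
        obtain ⟨k₁, v₁, v₂, hv₁, hv₂, hZ'⟩ := hback_dia j hjn w₁ w₂ hZ k₂
        have h2 := sat_mono S₂ V₂ hS₂ hV₂ φ _ _ hv₂ hk₂
        have h1 := (ih j (by omega) v₁ v₂ hZ' hL (by omega)).mpr h2
        exact ⟨k₁, sat_mono S₁ V₁ hS₁ hV₁ φ _ _ hv₁ h1⟩
    | box φ ih => intro i hi w₁ w₂ hZ hL hlen; exact absurd hL (by simp [LangDia])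
    | untl φ ψ ihφ ihψ => intro i hi w₁ w₂ hZ hL hlen; exact absurd hL (by simp [LangDia])
    | rels φ ψ ihφ ihψ => intro i hi w₁ w₂ hZ hL hlen; exact absurd hL (by simp [LangDia])
  intro i hi w₁ w₂ hZ φ hL hlen
  exact main φ i hi w₁ w₂ hZ hL hlen
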